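/- Let k : [0,2]×[0,1] → ℂ be bounded with |k| ≤ k_max. The kernel-based autoconvolution operator F is locally Lipschitz: for all x₁, x₂ ∈ L²_ℂ(0,1), ‖F(x₁) − F(x₂)‖_{L²_ℂ(0,2)} ≤ √2 · k_max · (‖x₁‖_{L²} + ‖x₂‖_{L²}) · ‖x₁ − x₂‖_{L²}. -/

import Mathlib

open MeasureTheory Set

private lemma aux_integrable_mul {f g : ℝ → ℂ}
    (hf : MemLp f 2 volume) (hg : MemLp g 2 volume) :
    Integrable (fun q => f q * g q) volume := by
  have h : (1 : ENNReal) / 1 = 1 / 2 + 1 / 2 := by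
    rw [div_one, ENNReal.add_halves]
  have h2 : MemLp (f • g) 1 volume := hg.smul hf
  rw [memLp_one_iff_integrable] at h2
  exact h2

private lemma aux_CS {f g : ℝ → ℂ} (hf : MemLp f 2 volume) (hg : MemLp g 2 volume) :
    ∫ q, ‖f q‖ * ‖g q‖ ≤
      Real.sqrt (∫ q, ‖f q‖ ^ 2) * Real.sqrt (∫ q, ‖g q‖ ^ 2) := by
  have h2 : ENNReal.ofReal (2:ℝ) = 2 := by norm_num
  have hf' : MemLp f (ENNReal.ofReal (2:ℝ)) volume := by rw [h2]; exact hf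
  have hg' : MemLp g (ENNReal.ofReal (2:ℝ)) volume := by rw [h2]; exact hg
  have h := integral_mul_norm_le_Lp_mul_Lq (μ := volume)
    (Real.HolderConjugate.two_two : Real.HolderConjugate 2 2) hf' hg'
  have hpow : ∀ a : ℝ, a ^ (2:ℝ) = a ^ (2:ℕ) := fun a => by
    rw [show (2:ℝ) = ((2:ℕ):ℝ) by norm_num, Real.rpow_natCast]
  simp_rw [hpow] at h
  rw [Real.sqrt_eq_rpow, Real.sqrt_eq_rpow]
  exact h

private lemma aux_shift_memℒp {u : ℝ → ℂ} (hu : MemLp u 2 volume) (s : ℝ) :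
    MemLp (fun q => u (s - q)) 2 volume :=
  hu.comp_measurePreserving (Measure.measurePreserving_sub_left volume s)

private lemma aux_core (k : ℝ → ℝ → ℂ) (kmax : ℝ)
    (hkm : Measurable (Function.uncurry k)) (hkb : ∀ s q : ℝ, ‖k s q‖ ≤ kmax)
    {u v : ℝ → ℂ} (hum : StronglyMeasurable u) (hvm : StronglyMeasurable v)
    (hu : MemLp u 2 volume) (hv : MemLp v 2 volume) (s : ℝ) :
    Integrable (fun q => k s q * u (s - q) * v q) volume ∧
    ∫ q in Ioc (0:ℝ) s, ‖k s q * u (s - q) * v q‖ ≤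
      kmax * (Real.sqrt (∫ q, ‖u q‖ ^ 2) * Real.sqrt (∫ q, ‖v q‖ ^ 2)) := by
  have hkmax : 0 ≤ kmax := le_trans (norm_nonneg (k 0 0)) (hkb 0 0)
  have hks : Measurable (fun q => k s q) := hkm.comp measurable_prodMk_left
  have hus : StronglyMeasurable (fun q => u (s - q)) :=
    hum.comp_measurable (measurable_const.sub measurable_id)
  have hu2 : MemLp (fun q => u (s - q)) 2 volume := aux_shift_memℒp hu s
  have hφ : MemLp (fun q => k s q * u (s - q)) 2 volume := by
    refine MemLp.of_le_mul (c := kmax) hu2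
      (hks.aestronglyMeasurable.mul hus.aestronglyMeasurable)
      (Filter.Eventually.of_forall fun q => ?_)
    rw [norm_mul]
    exact mul_le_mul_of_nonneg_right (hkb s q) (norm_nonneg _)
  have hint : Integrable (fun q => k s q * u (s - q) * v q) volume :=
    aux_integrable_mul hφ hv
  refine ⟨hint, ?_⟩
  have hprod : Integrable (fun q => ‖u (s - q)‖ * ‖v q‖) volume := by
    have := (aux_integrable_mul hu2 hv).norm
    simpa [norm_mul] using this
  have h1 : ∫ q in Ioc (0:ℝ) s, ‖k s q * u (s - q) * v q‖ ≤
      ∫ q, ‖k s q * u (s - q) * v q‖ :=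
    setIntegral_le_integral hint.norm
      (Filter.Eventually.of_forall fun q => norm_nonneg _)
  have h2 : ∫ q, ‖k s q * u (s - q) * v q‖ ≤
      ∫ q, kmax * (‖u (s - q)‖ * ‖v q‖) := by
    refine integral_mono hint.norm (hprod.const_mul kmax)
      (fun q => ?_)
    rw [norm_mul, norm_mul, mul_assoc]
    exact mul_le_mul_of_nonneg_right (hkb s q)
      (mul_nonneg (norm_nonneg _) (norm_nonneg _))
  have h3 : ∫ q, kmax * (‖u (s - q)‖ * ‖v q‖) =
      kmax * ∫ q, ‖u (s - q)‖ * ‖v q‖ := integral_const_mul _ _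
  have h4 : ∫ q, ‖u (s - q)‖ * ‖v q‖ ≤
      Real.sqrt (∫ q, ‖u (s - q)‖ ^ 2) * Real.sqrt (∫ q, ‖v q‖ ^ 2) :=
    aux_CS hu2 hv
  have h5 : (∫ q, ‖u (s - q)‖ ^ 2) = ∫ q, ‖u q‖ ^ 2 :=
    integral_sub_left_eq_self (fun q => ‖u q‖ ^ 2) volume s
  rw [h5] at h4
  calc ∫ q in Ioc (0:ℝ) s, ‖k s q * u (s - q) * v q‖
      ≤ ∫ q, ‖k s q * u (s - q) * v q‖ := h1
    _ ≤ ∫ q, kmax * (‖u (s - q)‖ * ‖v q‖) := h2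
    _ = kmax * ∫ q, ‖u (s - q)‖ * ‖v q‖ := h3
    _ ≤ kmax * (Real.sqrt (∫ q, ‖u q‖ ^ 2) * Real.sqrt (∫ q, ‖v q‖ ^ 2)) :=
        mul_le_mul_of_nonneg_left h4 hkmax

private lemma aux_meas (k : ℝ → ℝ → ℂ)
    (hkm : Measurable (Function.uncurry k)) {u v : ℝ → ℂ}
    (hum : StronglyMeasurable u) (hvm : StronglyMeasurable v) :
    StronglyMeasurable (fun s => ∫ q in Ioc (0:ℝ) s, k s q * u (s - q) * v q) := by
  have hg : Measurable (fun p : ℝ × ℝ => k p.1 p.2 * u (p.1 - p.2) * v p.2) :=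
    ((hkm.comp measurable_id).mul
      (hum.measurable.comp (measurable_fst.sub measurable_snd))).mul
      (hvm.measurable.comp measurable_snd)
  have hset : MeasurableSet {p : ℝ × ℝ | 0 < p.2 ∧ p.2 ≤ p.1} :=
    (measurableSet_lt measurable_const measurable_snd).inter
      (measurableSet_le measurable_snd measurable_fst)
  have hF : StronglyMeasurable
      ({p : ℝ × ℝ | 0 < p.2 ∧ p.2 ≤ p.1}.indicator
        (fun p : ℝ × ℝ => k p.1 p.2 * u (p.1 - p.2) * v p.2)) :=
    hg.stronglyMeasurable.indicator hset
  have h := StronglyMeasurable.integral_prod_right' (ν := volume) hF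
  have heq : (fun s => ∫ (q : ℝ),
      ({p : ℝ × ℝ | 0 < p.2 ∧ p.2 ≤ p.1}.indicator
        (fun p : ℝ × ℝ => k p.1 p.2 * u (p.1 - p.2) * v p.2)) (s, q))
      = fun s => ∫ q in Ioc (0:ℝ) s, k s q * u (s - q) * v q := by
    funext s
    rw [← integral_indicator measurableSet_Ioc]
    refine integral_congr_ae (Filter.Eventually.of_forall fun q => ?_)
    simp only [Set.indicator_apply, mem_Ioc, Set.mem_setOf_eq]
  rw [heq] at h
  exact h

private lemma aux_key (k : ℝ → ℝ → ℂ) (kmax : ℝ)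
    (hkm : Measurable (Function.uncurry k)) (hkb : ∀ s q : ℝ, ‖k s q‖ ≤ kmax)
    (x y : ℝ → ℂ) (hxm : StronglyMeasurable x) (hym : StronglyMeasurable y)
    (hx : MemLp x 2 volume) (hy : MemLp y 2 volume)
    (hx0 : ∀ t : ℝ, t ∉ Ioc (0:ℝ) 1 → x t = 0)
    (hy0 : ∀ t : ℝ, t ∉ Ioc (0:ℝ) 1 → y t = 0) :
    Real.sqrt (∫ s in Ioc (0:ℝ) 2,
        ‖(∫ q in Ioc (0:ℝ) s, k s q * x (s - q) * x q)
          - (∫ q in Ioc (0:ℝ) s, k s q * y (s - q) * y q)‖^2)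
      ≤ Real.sqrt 2 * kmax *
        (Real.sqrt (∫ q in Ioc (0:ℝ) 1, ‖x q‖^2)
          + Real.sqrt (∫ q in Ioc (0:ℝ) 1, ‖y q‖^2)) *
        Real.sqrt (∫ q in Ioc (0:ℝ) 1, ‖x q - y q‖^2) := by
  have hkmax : 0 ≤ kmax := le_trans (norm_nonneg (k 0 0)) (hkb 0 0)
  have hdm : StronglyMeasurable (fun t => x t - y t) := hxm.sub hym
  have hd : MemLp (fun t => x t - y t) 2 volume := hx.sub hy
  have hd0 : ∀ t : ℝ, t ∉ Ioc (0:ℝ) 1 → x t - y t = 0 := fun t ht => by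
    rw [hx0 t ht, hy0 t ht, sub_zero]
  have ex : (∫ q in Ioc (0:ℝ) 1, ‖x q‖^2) = ∫ q, ‖x q‖^2 :=
    setIntegral_eq_integral_of_forall_compl_eq_zero fun q hq => by
      rw [hx0 q hq]; simp
  have ey : (∫ q in Ioc (0:ℝ) 1, ‖y q‖^2) = ∫ q, ‖y q‖^2 :=
    setIntegral_eq_integral_of_forall_compl_eq_zero fun q hq => by
      rw [hy0 q hq]; simp
  have ed : (∫ q in Ioc (0:ℝ) 1, ‖x q - y q‖^2) = ∫ q, ‖x q - y q‖^2 :=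
    setIntegral_eq_integral_of_forall_compl_eq_zero fun q hq => by
      rw [hd0 q hq]; simp
  rw [ex, ey, ed]
  set A := Real.sqrt (∫ q, ‖x q‖^2) with hA
  set B := Real.sqrt (∫ q, ‖y q‖^2) with hB
  set D := Real.sqrt (∫ q, ‖x q - y q‖^2) with hD
  have hA0 : 0 ≤ A := Real.sqrt_nonneg _
  have hB0 : 0 ≤ B := Real.sqrt_nonneg _
  have hD0 : 0 ≤ D := Real.sqrt_nonneg _
  set C := kmax * ((A + B) * D) with hC
  have hC0 : 0 ≤ C :=
    mul_nonneg hkmax (mul_nonneg (add_nonneg hA0 hB0) hD0)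
  -- pointwise bound
  have hpt : ∀ s : ℝ,
      ‖(∫ q in Ioc (0:ℝ) s, k s q * x (s - q) * x q)
        - (∫ q in Ioc (0:ℝ) s, k s q * y (s - q) * y q)‖ ≤ C := by
    intro s
    obtain ⟨i1, b1⟩ := aux_core k kmax hkm hkb hxm hdm hx hd s
    obtain ⟨i2, b2⟩ := aux_core k kmax hkm hkb hdm hym hd hy s
    obtain ⟨ixx, -⟩ := aux_core k kmax hkm hkb hxm hxm hx hx s
    obtain ⟨iyy, -⟩ := aux_core k kmax hkm hkb hym hym hy hy s
    have hsplit : (∫ q in Ioc (0:ℝ) s, k s q * x (s - q) * x q)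
        - (∫ q in Ioc (0:ℝ) s, k s q * y (s - q) * y q)
        = (∫ q in Ioc (0:ℝ) s, k s q * x (s - q) * (x q - y q))
          + ∫ q in Ioc (0:ℝ) s, k s q * (x (s - q) - y (s - q)) * y q := by
      rw [← integral_add i1.integrableOn i2.integrableOn,
        ← integral_sub ixx.integrableOn iyy.integrableOn]
      refine integral_congr_ae (Filter.Eventually.of_forall fun q => ?_)
      ring
    rw [hsplit]
    have n1 : ‖∫ q in Ioc (0:ℝ) s, k s q * x (s - q) * (x q - y q)‖ ≤
        kmax * (A * D) :=
      le_trans (norm_integral_le_integral_norm _) b1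
    have n2 : ‖∫ q in Ioc (0:ℝ) s, k s q * (x (s - q) - y (s - q)) * y q‖ ≤
        kmax * (D * B) :=
      le_trans (norm_integral_le_integral_norm _) b2
    calc ‖(∫ q in Ioc (0:ℝ) s, k s q * x (s - q) * (x q - y q))
          + ∫ q in Ioc (0:ℝ) s, k s q * (x (s - q) - y (s - q)) * y q‖
        ≤ ‖∫ q in Ioc (0:ℝ) s, k s q * x (s - q) * (x q - y q)‖
          + ‖∫ q in Ioc (0:ℝ) s, k s q * (x (s - q) - y (s - q)) * y q‖ :=
          norm_add_le _ _
      _ ≤ kmax * (A * D) + kmax * (D * B) := add_le_add n1 n2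
      _ = C := by rw [hC]; ring
  -- measurability of the outer integrand
  have hmeas : AEStronglyMeasurable
      (fun s => (∫ q in Ioc (0:ℝ) s, k s q * x (s - q) * x q)
        - (∫ q in Ioc (0:ℝ) s, k s q * y (s - q) * y q))
      (volume.restrict (Ioc (0:ℝ) 2)) :=
    ((aux_meas k hkm hxm hxm).sub (aux_meas k hkm hym hym)).aestronglyMeasurable.restrict
  set f := fun s => (∫ q in Ioc (0:ℝ) s, k s q * x (s - q) * x q)
    - (∫ q in Ioc (0:ℝ) s, k s q * y (s - q) * y q) with hf
  have hm2 : AEStronglyMeasurable (fun s => ‖f s‖^2)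
      (volume.restrict (Ioc (0:ℝ) 2)) := by
    simp only [pow_two]
    exact hmeas.norm.mul hmeas.norm
  have hi : IntegrableOn (fun s => ‖f s‖^2) (Ioc (0:ℝ) 2) volume := by
    refine Integrable.mono' (integrable_const (C^2)) hm2
      (Filter.Eventually.of_forall fun s => ?_)
    rw [Real.norm_of_nonneg (by positivity)]
    exact pow_le_pow_left₀ (norm_nonneg _) (hpt s) 2
  have hvol : (volume (Ioc (0:ℝ) 2)).toReal = 2 := by
    rw [Real.volume_Ioc]
    simp [ENNReal.toReal_ofReal]
  have hle : (∫ s in Ioc (0:ℝ) 2, ‖f s‖^2) ≤ 2 * C^2 := by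
    have hconst : IntegrableOn (fun _ : ℝ => C^2) (Ioc (0:ℝ) 2) volume :=
      integrable_const _
    have := setIntegral_mono_on hi hconst measurableSet_Ioc
      (fun s _ => by
        exact pow_le_pow_left₀ (norm_nonneg _) (hpt s) 2)
    calc (∫ s in Ioc (0:ℝ) 2, ‖f s‖^2)
        ≤ ∫ _ in Ioc (0:ℝ) 2, C^2 := this
      _ = (volume (Ioc (0:ℝ) 2)).toReal • C^2 := setIntegral_const _
      _ = 2 * C^2 := by rw [hvol, smul_eq_mul]
  calc Real.sqrt (∫ s in Ioc (0:ℝ) 2, ‖f s‖^2)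
      ≤ Real.sqrt (2 * C^2) := Real.sqrt_le_sqrt hle
    _ = Real.sqrt 2 * C := by
        rw [Real.sqrt_mul (by norm_num : (0:ℝ) ≤ 2), Real.sqrt_sq hC0]
    _ = Real.sqrt 2 * kmax * (A + B) * D := by rw [hC]; ring

/-- The kernel-based autoconvolution operator with bounded kernel `|k| ≤ k_max` is locally
Lipschitz: `‖F(x₁) − F(x₂)‖_{L²(0,2)} ≤ √2 k_max (‖x₁‖ + ‖x₂‖) ‖x₁ − x₂‖`. -/
theorem stmt15 (k : ℝ → ℝ → ℂ) (kmax : ℝ)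
    (hkm : Measurable (Function.uncurry k))
    (hkb : ∀ s q : ℝ, ‖k s q‖ ≤ kmax)
    (x₁ x₂ : ℝ → ℂ)
    (hx₁m : AEStronglyMeasurable x₁ volume) (hx₂m : AEStronglyMeasurable x₂ volume)
    (hx₁ : MemLp x₁ 2 (volume.restrict (Ioc (0:ℝ) 1)))
    (hx₂ : MemLp x₂ 2 (volume.restrict (Ioc (0:ℝ) 1)))
    (hx₁0 : ∀ t : ℝ, t ∉ Icc (0:ℝ) 1 → x₁ t = 0)
    (hx₂0 : ∀ t : ℝ, t ∉ Icc (0:ℝ) 1 → x₂ t = 0) :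
    Real.sqrt (∫ s in Ioc (0:ℝ) 2,
        ‖(∫ q in Ioc (0:ℝ) s, k s q * x₁ (s - q) * x₁ q)
          - (∫ q in Ioc (0:ℝ) s, k s q * x₂ (s - q) * x₂ q)‖^2)
      ≤ Real.sqrt 2 * kmax *
        (Real.sqrt (∫ q in Ioc (0:ℝ) 1, ‖x₁ q‖^2)
          + Real.sqrt (∫ q in Ioc (0:ℝ) 1, ‖x₂ q‖^2)) *
        Real.sqrt (∫ q in Ioc (0:ℝ) 1, ‖x₁ q - x₂ q‖^2) := by
  -- measurable representatives, vanishing outside `Ioc 0 1`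
  set x := (Ioc (0:ℝ) 1).indicator (hx₁m.mk x₁) with hxdef
  set y := (Ioc (0:ℝ) 1).indicator (hx₂m.mk x₂) with hydef
  have hxm : StronglyMeasurable x :=
    hx₁m.stronglyMeasurable_mk.indicator measurableSet_Ioc
  have hym : StronglyMeasurable y :=
    hx₂m.stronglyMeasurable_mk.indicator measurableSet_Ioc
  have h0 : ∀ᵐ t : ℝ, t ≠ 0 := by
    rw [ae_iff]
    simpa using measure_singleton (0:ℝ)
  have hae : ∀ (z : ℝ → ℂ) (hzm : AEStronglyMeasurable z volume),
      (∀ t : ℝ, t ∉ Icc (0:ℝ) 1 → z t = 0) →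
      (Ioc (0:ℝ) 1).indicator (hzm.mk z) =ᵐ[volume] z := by
    intro z hzm hz0
    filter_upwards [h0, hzm.ae_eq_mk] with t ht hmk
    by_cases hmem : t ∈ Ioc (0:ℝ) 1
    · rw [indicator_of_mem hmem]; exact hmk.symm
    · rw [indicator_of_notMem hmem]
      have htI : t ∉ Icc (0:ℝ) 1 := fun hc =>
        hmem ⟨lt_of_le_of_ne hc.1 (Ne.symm ht), hc.2⟩
      exact (hz0 t htI).symm
  have haex : x =ᵐ[volume] x₁ := hae x₁ hx₁m hx₁0
  have haey : y =ᵐ[volume] x₂ := hae x₂ hx₂m hx₂0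
  have hxL : MemLp x 2 volume := by
    refine ⟨hxm.aestronglyMeasurable, ?_⟩
    rw [hxdef, eLpNorm_indicator_eq_eLpNorm_restrict measurableSet_Ioc,
      eLpNorm_congr_ae (Filter.EventuallyEq.symm (ae_restrict_of_ae hx₁m.ae_eq_mk))]
    exact hx₁.2
  have hyL : MemLp y 2 volume := by
    refine ⟨hym.aestronglyMeasurable, ?_⟩
    rw [hydef, eLpNorm_indicator_eq_eLpNorm_restrict measurableSet_Ioc,
      eLpNorm_congr_ae (Filter.EventuallyEq.symm (ae_restrict_of_ae hx₂m.ae_eq_mk))]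
    exact hx₂.2
  have hx0 : ∀ t : ℝ, t ∉ Ioc (0:ℝ) 1 → x t = 0 := fun t ht =>
    indicator_of_notMem ht _
  have hy0 : ∀ t : ℝ, t ∉ Ioc (0:ℝ) 1 → y t = 0 := fun t ht =>
    indicator_of_notMem ht _
  -- rewrite inner integrals
  have hinner : ∀ (z : ℝ → ℂ) (w : ℝ → ℂ), w =ᵐ[volume] z → ∀ s : ℝ,
      (∫ q in Ioc (0:ℝ) s, k s q * z (s - q) * z q)
        = ∫ q in Ioc (0:ℝ) s, k s q * w (s - q) * w q := by
    intro z w hw s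
    refine integral_congr_ae (ae_restrict_of_ae ?_)
    have h2 : (fun q => w (s - q)) =ᵐ[volume] (fun q => z (s - q)) :=
      (Measure.measurePreserving_sub_left volume s).quasiMeasurePreserving.ae_eq_comp hw
    filter_upwards [hw, h2] with q hq hsq
    rw [← hq, ← hsq]
  have houter : (∫ s in Ioc (0:ℝ) 2,
      ‖(∫ q in Ioc (0:ℝ) s, k s q * x₁ (s - q) * x₁ q)
        - (∫ q in Ioc (0:ℝ) s, k s q * x₂ (s - q) * x₂ q)‖^2)
      = ∫ s in Ioc (0:ℝ) 2,
      ‖(∫ q in Ioc (0:ℝ) s, k s q * x (s - q) * x q)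
        - (∫ q in Ioc (0:ℝ) s, k s q * y (s - q) * y q)‖^2 := by
    refine integral_congr_ae (Filter.Eventually.of_forall fun s => ?_)
    show ‖(∫ q in Ioc (0:ℝ) s, k s q * x₁ (s - q) * x₁ q)
          - (∫ q in Ioc (0:ℝ) s, k s q * x₂ (s - q) * x₂ q)‖^2
        = ‖(∫ q in Ioc (0:ℝ) s, k s q * x (s - q) * x q)
          - (∫ q in Ioc (0:ℝ) s, k s q * y (s - q) * y q)‖^2
    rw [hinner x₁ x haex s, hinner x₂ y haey s]
  have hr1 : (∫ q in Ioc (0:ℝ) 1, ‖x₁ q‖^2) = ∫ q in Ioc (0:ℝ) 1, ‖x q‖^2 :=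
    integral_congr_ae ((ae_restrict_of_ae haex).mono fun q hq => by simp only [hq])
  have hr2 : (∫ q in Ioc (0:ℝ) 1, ‖x₂ q‖^2) = ∫ q in Ioc (0:ℝ) 1, ‖y q‖^2 :=
    integral_congr_ae ((ae_restrict_of_ae haey).mono fun q hq => by simp only [hq])
  have hr3 : (∫ q in Ioc (0:ℝ) 1, ‖x₁ q - x₂ q‖^2)
      = ∫ q in Ioc (0:ℝ) 1, ‖x q - y q‖^2 :=
    integral_congr_ae ((ae_restrict_of_ae (haex.sub haey)).mono fun q hq => by
      simp only [Pi.sub_apply] at hq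
      simp only [hq])
  rw [houter, hr1, hr2, hr3]
  exact aux_key k kmax hkm hkb x y hxm hym hxL hyL hx0 hy0
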